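/- If H is the i-graph of some graph G, then for any k ≥ i(G) there exists a graph G* with i(G*) = k and ℐ(G*) ≅ H. In particular, adding ℓ = k − i(G) isolated vertices to G yields such a G*: X is an i-set of G iff X ∪ S is an i-set of G ∪ S (S the set of added isolated vertices), and this bijection preserves adjacency in the i-graphs. -/

import Mathlib

open Finset

set_option linter.unusedSectionVars false

variable {V : Type*}

/-- `S` is an independent dominating (equivalently, maximal independent) set of `G`. -/
def IndepDom (G : SimpleGraph V) (S : Finset V) : Prop :=
  (∀ ⦃x⦄, x ∈ S → ∀ ⦃y⦄, y ∈ S → ¬ G.Adj x y) ∧ ∀ v, v ∉ S → ∃ u ∈ S, G.Adj u v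

/-- The independent domination number `i(G)`. -/
noncomputable def iNum (G : SimpleGraph V) : ℕ :=
  sInf {n | ∃ S : Finset V, IndepDom G S ∧ S.card = n}

/-- An `i`-set: a maximal independent set of minimum cardinality. -/
def IsISet (G : SimpleGraph V) (S : Finset V) : Prop :=
  IndepDom G S ∧ S.card = iNum G

/-- The `i`-graph of `G`: vertices are the `i`-sets of `G`, two of them adjacent iff their
symmetric difference is a pair of adjacent vertices of `G`. -/
def iGraph (G : SimpleGraph V) [DecidableEq V] : SimpleGraph {S : Finset V // IsISet G S} where
  Adj X Y := ∃ x y, G.Adj x y ∧ symmDiff X.1 Y.1 = {x, y}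
  symm := by
    refine ⟨?_⟩
    rintro X Y ⟨x, y, hxy, h⟩
    exact ⟨x, y, hxy, by rwa [symmDiff_comm]⟩
  loopless := by
    refine ⟨?_⟩
    rintro X ⟨x, y, hxy, h⟩
    rw [symmDiff_self] at h
    exact (Finset.insert_ne_empty x {y}) (by simpa [eq_comm] using h)

/-- `G` together with `ℓ` added isolated vertices. -/
def addIso (G : SimpleGraph V) (ℓ : ℕ) : SimpleGraph (V ⊕ Fin ℓ) where
  Adj a b := match a, b with
    | Sum.inl a, Sum.inl b => G.Adj a b
    | _, Sum.inr _ => False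
    | Sum.inr _, _ => False
  symm := by refine ⟨?_⟩; rintro (a | i) (b | j) h
             · exact h.symm
             · exact h
             · exact h
             · exact h
  loopless := by refine ⟨?_⟩; rintro (a | i) h
                 · exact G.loopless.irrefl a h
                 · exact h

section Aux

variable {V : Type} [Fintype V] [DecidableEq V]

lemma exists_indepDom (G : SimpleGraph V) : ∃ S : Finset V, IndepDom G S := by
  classical
  obtain ⟨S, hS, hmax⟩ := Finset.exists_max_image
    ((univ : Finset (Finset V)).filter (fun S => ∀ x ∈ S, ∀ y ∈ S, ¬ G.Adj x y))
    Finset.card ⟨∅, by simp⟩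
  simp only [mem_filter, mem_univ, true_and] at hS hmax
  refine ⟨S, fun x hx y hy => hS x hx y hy, ?_⟩
  intro v hv
  by_contra h
  push_neg at h
  have hins : ∀ x ∈ insert v S, ∀ y ∈ insert v S, ¬ G.Adj x y := by
    intro x hx y hy
    rcases mem_insert.1 hx with rfl | hx'
    · rcases mem_insert.1 hy with rfl | hy'
      · exact G.loopless.irrefl _
      · intro ha; exact h y hy' ha.symm
    · rcases mem_insert.1 hy with rfl | hy'
      · exact h x hx'
      · exact hS x hx' y hy' 
  have := hmax _ hins
  rw [Finset.card_insert_of_notMem hv] at this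
  omega

lemma iNum_setNonempty (G : SimpleGraph V) :
    {n | ∃ S : Finset V, IndepDom G S ∧ S.card = n}.Nonempty := by
  obtain ⟨S, hS⟩ := exists_indepDom G
  exact ⟨S.card, S, hS, rfl⟩

lemma iNum_le (G : SimpleGraph V) {S : Finset V} (h : IndepDom G S) : iNum G ≤ S.card :=
  Nat.sInf_le ⟨S, h, rfl⟩

variable {ℓ : ℕ}

/-- Encoding of a set of `V` as a set of `V ⊕ Fin ℓ` including all added vertices. -/
def enc (ℓ : ℕ) (X : Finset V) : Finset (V ⊕ Fin ℓ) :=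
  X.image Sum.inl ∪ Finset.univ.image Sum.inr

lemma mem_enc_inl {X : Finset V} {x : V} : Sum.inl x ∈ enc ℓ X ↔ x ∈ X := by
  simp [enc]

lemma mem_enc_inr {X : Finset V} {i : Fin ℓ} : Sum.inr i ∈ enc ℓ X := by
  simp [enc]

lemma card_enc (X : Finset V) : (enc ℓ X).card = X.card + ℓ := by
  rw [enc, Finset.card_union_of_disjoint, Finset.card_image_of_injective _ Sum.inl_injective,
    Finset.card_image_of_injective _ Sum.inr_injective, card_univ, Fintype.card_fin]
  simp [Finset.disjoint_left]

lemma indepDom_enc {G : SimpleGraph V} {X : Finset V} :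
    IndepDom (addIso G ℓ) (enc ℓ X) ↔ IndepDom G X := by
  constructor
  · rintro ⟨hind, hdom⟩
    refine ⟨fun x hx y hy h => hind (mem_enc_inl.2 hx) (mem_enc_inl.2 hy) h, ?_⟩
    intro v hv
    obtain ⟨u, hu, hadj⟩ := hdom (Sum.inl v) (by simpa [mem_enc_inl] using hv)
    rcases u with u | i
    · exact ⟨u, mem_enc_inl.1 hu, hadj⟩
    · exact (hadj : False).elim
  · rintro ⟨hind, hdom⟩
    constructor
    · rintro (x | i) hx (y | j) hy h
      · exact hind (mem_enc_inl.1 hx) (mem_enc_inl.1 hy) h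
      all_goals exact h
    · rintro (v | i) hv
      · obtain ⟨u, hu, hadj⟩ := hdom v (by simpa [mem_enc_inl] using hv)
        exact ⟨Sum.inl u, mem_enc_inl.2 hu, hadj⟩
      · exact absurd mem_enc_inr hv

lemma inr_mem_of_indepDom {G : SimpleGraph V} {T : Finset (V ⊕ Fin ℓ)}
    (hT : IndepDom (addIso G ℓ) T) (i : Fin ℓ) : Sum.inr i ∈ T := by
  by_contra h
  obtain ⟨u, hu, hadj⟩ := hT.2 _ h
  rcases u with u | j
  · exact (hadj : False).elim
  · exact (hadj : False).elim

/-- Decoding: the `V`-part of a set of `V ⊕ Fin ℓ`. -/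
def dec (T : Finset (V ⊕ Fin ℓ)) : Finset V := univ.filter (fun x => Sum.inl x ∈ T)

lemma enc_dec {T : Finset (V ⊕ Fin ℓ)} (h : ∀ i : Fin ℓ, Sum.inr i ∈ T) :
    enc ℓ (dec T) = T := by
  ext a
  rcases a with x | i
  · simp [mem_enc_inl, dec]
  · simp [mem_enc_inr, h i]

lemma dec_enc (X : Finset V) : dec (enc ℓ X) = X := by
  ext x; simp [dec, mem_enc_inl]

lemma iNum_addIso (G : SimpleGraph V) (ℓ : ℕ) : iNum (addIso G ℓ) = iNum G + ℓ := by
  obtain ⟨S, hS, hcard⟩ := Nat.sInf_mem (iNum_setNonempty G)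
  apply le_antisymm
  · have := iNum_le (addIso G ℓ) (indepDom_enc.2 hS)
    rwa [card_enc, hcard] at this
  · obtain ⟨T, hT, hTcard⟩ := Nat.sInf_mem (iNum_setNonempty (addIso G ℓ))
    have hX : IndepDom G (dec T) :=
      indepDom_enc.1 (by rwa [enc_dec (inr_mem_of_indepDom hT)])
    have h1 : T.card = (dec T).card + ℓ := by
      rw [← card_enc (dec T), enc_dec (inr_mem_of_indepDom hT)]
    have h2 : T.card = iNum (addIso G ℓ) := hTcard
    have h3 := iNum_le G hX
    omega

lemma isISet_enc {G : SimpleGraph V} (ℓ : ℕ) {X : Finset V} :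
    IsISet G X ↔ IsISet (addIso G ℓ) (enc ℓ X) := by
  rw [IsISet, IsISet, indepDom_enc, card_enc, iNum_addIso]
  constructor
  · rintro ⟨h, hc⟩; exact ⟨h, by omega⟩
  · rintro ⟨h, hc⟩; exact ⟨h, by omega⟩

lemma symmDiff_enc (X Y : Finset V) :
    symmDiff (enc ℓ X) (enc ℓ Y) = (symmDiff X Y).image Sum.inl := by
  ext a
  rcases a with x | i
  · simp [Finset.mem_symmDiff, mem_enc_inl]
  · simp [Finset.mem_symmDiff, mem_enc_inr]

lemma adj_iff_enc (G : SimpleGraph V) (ℓ : ℕ) (X Y : Finset V) :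
    (∃ x y, G.Adj x y ∧ symmDiff X Y = {x, y}) ↔
    (∃ a b, (addIso G ℓ).Adj a b ∧ symmDiff (enc ℓ X) (enc ℓ Y) = {a, b}) := by
  rw [symmDiff_enc]
  constructor
  · rintro ⟨x, y, hxy, h⟩
    exact ⟨Sum.inl x, Sum.inl y, hxy, by rw [h]; simp⟩
  · rintro ⟨(a | i), (b | j), hab, h⟩
    · refine ⟨a, b, hab, Finset.image_injective (f := (Sum.inl : V → V ⊕ Fin ℓ)) Sum.inl_injective ?_⟩
      rw [h]; simp
    · exact (hab : False).elim
    · exact (hab : False).elim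
    · exact (hab : False).elim

/-- The `i`-graphs of `G + ℓ·K₁` and `G` are isomorphic. -/
noncomputable def isetIso (G : SimpleGraph V) (ℓ : ℕ) :
    iGraph (addIso G ℓ) ≃g iGraph G where
  toEquiv :=
    { toFun := fun T => ⟨dec T.1, by
        have h := enc_dec (inr_mem_of_indepDom T.2.1)
        exact (isISet_enc (G := G) ℓ (X := dec T.1)).2 (by rw [h]; exact T.2)⟩
      invFun := fun X => ⟨enc ℓ X.1, (isISet_enc ℓ).1 X.2⟩
      left_inv := fun T => Subtype.ext (enc_dec (inr_mem_of_indepDom T.2.1))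
      right_inv := fun X => Subtype.ext (dec_enc X.1) }
  map_rel_iff' := by
    intro a b
    show (∃ x y, G.Adj x y ∧ symmDiff (dec a.1) (dec b.1) = {x, y}) ↔ _
    rw [adj_iff_enc G ℓ, enc_dec (inr_mem_of_indepDom a.2.1),
      enc_dec (inr_mem_of_indepDom b.2.1)]
    rfl

end Aux

/-- The Inflation Lemma: for any `k ≥ i(G)` there is a graph `G*` with `i(G*) = k` and the
same `i`-graph; indeed adding `ℓ = k − i(G)` isolated vertices `S` works: `X` is an `i`-set
of `G` iff `X ∪ S` is an `i`-set of `G*`, and this bijection preserves adjacency. -/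
theorem inflation_lemma {V : Type} [Fintype V] [DecidableEq V] (G : SimpleGraph V)
    (k : ℕ) (hk : iNum G ≤ k) :
    (∃ (W : Type) (_ : Fintype W) (_ : DecidableEq W) (G' : SimpleGraph W),
       iNum G' = k ∧ Nonempty (iGraph G' ≃g iGraph G)) ∧
    iNum (addIso G (k - iNum G)) = k ∧
    (∀ X : Finset V, IsISet G X ↔
       IsISet (addIso G (k - iNum G)) (X.image Sum.inl ∪ Finset.univ.image Sum.inr)) ∧
    (∀ (X Y : {S : Finset V // IsISet G S})
       (hX : IsISet (addIso G (k - iNum G)) (X.1.image Sum.inl ∪ Finset.univ.image Sum.inr))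
       (hY : IsISet (addIso G (k - iNum G)) (Y.1.image Sum.inl ∪ Finset.univ.image Sum.inr)),
       (iGraph G).Adj X Y ↔
         (iGraph (addIso G (k - iNum G))).Adj ⟨_, hX⟩ ⟨_, hY⟩) := by
  have hkeq : iNum G + (k - iNum G) = k := Nat.add_sub_cancel' hk
  set l := k - iNum G with hl
  refine ⟨⟨V ⊕ Fin l, inferInstance, inferInstance, addIso G l,
      by rw [iNum_addIso]; omega, ⟨isetIso G l⟩⟩, by rw [iNum_addIso]; omega, ?_, ?_⟩
  · intro X
    exact isISet_enc l
  · intro X Y hX hY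
    exact adj_iff_enc G l X.1 Y.1
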